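/- arXiv:1303.2227 — 2 statements merged into one kernel-verified Lean document; each statement's English description precedes it below -/
import Mathlib

section
/- For all integers n ≥ 1, a ≥ 0, b ≥ 1, the multiple harmonic star sum H*_n({2}^a, 1, {2}^b) equals -2·∑_{k=1}^{n} (-1)^k·C(n,k)/(k^{2a+1+2b}·C(n+k,k)) - 4·∑_{k=1}^{n} H_{k-1}(-2b)·C(n,k)/(k^{2a+1}·C(n+k,k)), where H_{k-1}(-2b) = ∑_{j=1}^{k-1} (-1)^j/j^{2b}. -/
open Finset

/-- Sign factor for an alternating multiple harmonic sum entry. -/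
def aSgn (s : ℤ) : ℚ := if 0 < s then 1 else -1

/-- Alternating multiple harmonic sum `H_n(s₁,…,s_ℓ)` (strict indices). -/
def Hh : ℕ → List ℤ → ℚ
  | _, [] => 1
  | n, s :: r => ∑ k ∈ Finset.Icc 1 n, aSgn s ^ k / (k : ℚ) ^ s.natAbs * Hh (k - 1) r

/-- Alternating multiple harmonic star sum `H*_n(s₁,…,s_ℓ)` (weak indices). -/
def Hstar : ℕ → List ℤ → ℚ
  | _, [] => 1
  | n, s :: r => ∑ k ∈ Finset.Icc 1 n, aSgn s ^ k / (k : ℚ) ^ s.natAbs * Hstar k r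

/-- All compositions (ordered tuples of positive integers) of `w`. -/
def comps : ℕ → List (List ℕ)
  | 0 => [[]]
  | (w+1) => (List.range (w+1)).flatMap (fun j => (comps (w - j)).map (fun l => (j+1) :: l))
decreasing_by simp_wf; try omega

/-- Coerce a list of naturals to a list of integers. -/
def natList (l : List ℕ) : List ℤ := l.map (fun m => (m : ℤ))

/-! ### Auxiliary development for the proof -/

def dd (n k : ℕ) : ℚ := (n.choose k) / ((n+k).choose k)

lemma dd_zero (n : ℕ) : dd n 0 = 1 := by simp [dd]

lemma dd_top (n k : ℕ) (h : n < k) : dd n k = 0 := by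
  simp [dd, Nat.choose_eq_zero_of_lt h]

lemma choose_cast_ne (n k : ℕ) (h : k ≤ n) : ((n.choose k : ℚ)) ≠ 0 :=
  Nat.cast_ne_zero.mpr (Nat.choose_pos h).ne'

lemma dd_succ (n k : ℕ) : ((n:ℚ) - k) * dd n k = ((n:ℚ) + k + 1) * dd n (k+1) := by
  by_cases hk : k ≤ n
  · have h1 : ((n.choose (k+1) : ℚ)) * (k+1) = (n.choose k) * ((n:ℚ) - k) := by
      have h := Nat.choose_succ_right_eq n k
      have h' : ((n.choose (k+1) * (k+1) : ℕ) : ℚ) = ((n.choose k * (n - k) : ℕ) : ℚ) := by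
        exact_mod_cast h
      push_cast [Nat.cast_sub hk] at h'
      linarith [h']
    have h2 : (((n+k+1).choose (k+1) : ℚ)) * (k+1) = ((n:ℚ)+k+1) * ((n+k).choose k) := by
      have h := Nat.add_one_mul_choose_eq (n+k) k
      have h' : (((n+k+1) * (n+k).choose k : ℕ) : ℚ) = (((n+k+1).choose (k+1) * (k+1) : ℕ) : ℚ) := by
        exact_mod_cast h
      push_cast at h'
      linarith [h']
    have e1 : ((n+k).choose k : ℚ) ≠ 0 := choose_cast_ne _ _ (by omega)
    have e2 : (((n+k+1).choose (k+1)) : ℚ) ≠ 0 := choose_cast_ne _ _ (by omega)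
    have hre : n + (k+1) = (n+k)+1 := rfl
    have hk1 : ((k:ℚ)+1) ≠ 0 := by positivity
    have f1 : ((n.choose (k+1)) : ℚ) = (n.choose k) * ((n:ℚ) - k) / ((k:ℚ)+1) := by
      field_simp; linarith [h1]
    have f2 : (((n+k+1).choose (k+1)) : ℚ) = ((n:ℚ)+k+1) * ((n+k).choose k) / ((k:ℚ)+1) := by
      field_simp; linarith [h2]
    have hnk : ((n:ℚ)+k+1) ≠ 0 := by positivity
    rw [dd, dd, hre, f1, f2]
    field_simp
  · push_neg at hk
    rw [dd_top _ _ (by omega), dd_top _ _ (by omega)]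
    simp

lemma dd_rec (n k : ℕ) : (((n:ℚ)+1)^2 - (k:ℚ)^2) * dd (n+1) k = ((n:ℚ)+1)^2 * dd n k := by
  by_cases hk : k ≤ n+1
  · have h1 : (((n+1).choose k : ℚ)) * ((n:ℚ)+1-k) = ((n:ℚ)+1) * n.choose k := by
      have h := Nat.choose_mul_succ_eq n k
      have h' : ((n.choose k * (n+1) : ℕ) : ℚ) = (((n+1).choose k * (n+1-k) : ℕ) : ℚ) := by
        exact_mod_cast h
      push_cast [Nat.cast_sub hk] at h'
      linarith [h']
    have h2 : (((n+1+k).choose k : ℚ)) * ((n:ℚ)+1) = ((n:ℚ)+1+k) * ((n+k).choose k) := by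
      have h := Nat.choose_mul_succ_eq (n+k) k
      have hs : n+k+1-k = n+1 := by omega
      rw [hs] at h
      have h' : (((n+k).choose k * (n+k+1) : ℕ) : ℚ) = (((n+k+1).choose k * (n+1) : ℕ) : ℚ) := by
        exact_mod_cast h
      push_cast at h'
      have hre : n+1+k = n+k+1 := by omega
      rw [hre]
      linarith [h']
    have e1 : ((n+k).choose k : ℚ) ≠ 0 := choose_cast_ne _ _ (by omega)
    have e2 : (((n+1+k).choose k) : ℚ) ≠ 0 := choose_cast_ne _ _ (by omega)
    rw [dd, dd]
    field_simp
    linear_combination ((n:ℚ)+1+k) * ((n+k).choose k) * h1 - ((n:ℚ)+1) * (n.choose k) * h2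
  · push_neg at hk
    rw [dd_top _ _ (by omega), dd_top _ _ (by omega)]
    simp

lemma sum_Icc_one (n : ℕ) (f : ℕ → ℚ) : ∑ k ∈ Icc 1 n, f k = ∑ i ∈ range n, f (i+1) := by
  induction n with
  | zero => simp
  | succ n ih => rw [Finset.sum_Icc_succ_top (by omega), Finset.sum_range_succ, ih]

lemma sumdd_succ (n : ℕ) (f : ℕ → ℚ) :
    ∑ k ∈ Icc 1 (n+1), f k * dd (n+1) k
      = (∑ k ∈ Icc 1 n, f k * dd n k)
        + (((n:ℚ)+1)^2)⁻¹ * ∑ k ∈ Icc 1 (n+1), (k:ℚ)^2 * f k * dd (n+1) k := by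
  have h0 : ∑ k ∈ Icc 1 n, f k * dd n k = ∑ k ∈ Icc 1 (n+1), f k * dd n k := by
    rw [Finset.sum_Icc_succ_top (by omega)]
    simp [dd_top n (n+1) (by omega)]
  have hne : (((n:ℚ)+1)^2) ≠ 0 := by positivity
  rw [h0, Finset.mul_sum, ← Finset.sum_add_distrib]
  apply Finset.sum_congr rfl
  intro k _
  have h := dd_rec n k
  field_simp
  linear_combination f k * h

/-- depth-one alternating harmonic sum -/
def Hn (m s : ℕ) : ℚ := ∑ j ∈ Icc 1 m, (-1:ℚ)^j / (j:ℚ)^s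

def Af (s n : ℕ) : ℚ := ∑ k ∈ Icc 1 n, (-1:ℚ)^k / (k:ℚ)^s * dd n k

def Afp (s n : ℕ) : ℚ := ∑ k ∈ Icc 1 n, (-1:ℚ)^k * (k:ℚ) / (k:ℚ)^s * dd n k

lemma Hn_succ (m s : ℕ) : Hn (m+1) s = Hn m s + (-1:ℚ)^(m+1) / ((m:ℚ)+1)^s := by
  rw [Hn, Hn, Finset.sum_Icc_succ_top (by omega)]
  push_cast
  ring

lemma Azero (n : ℕ) (hn : 1 ≤ n) : Af 0 n = -1/2 := by
  have hn0 : ((n:ℚ)) ≠ 0 := Nat.cast_ne_zero.mpr (by omega)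
  set v : ℕ → ℚ := fun k => (-1:ℚ)^k * ((n:ℚ)-k) * dd n k with hv
  have key : (2*(n:ℚ)) * Af 0 n = ∑ i ∈ range n, (v (i+1) - v i) := by
    rw [Af, sum_Icc_one, Finset.mul_sum]
    apply Finset.sum_congr rfl
    intro i _
    have h := dd_succ n i
    simp only [hv]
    push_cast
    linear_combination ((-1:ℚ)^i) * h
  rw [Finset.sum_range_sub] at key
  simp only [hv, dd_zero] at key
  have hvn : ((-1:ℚ)^n * ((n:ℚ)-(n:ℚ)) * dd n n) = 0 := by rw [sub_self, mul_zero, zero_mul]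
  rw [hvn] at key
  have h2 : (2*(n:ℚ)) ≠ 0 := by positivity
  have key2 : (2*(n:ℚ)) * Af 0 n = (2*(n:ℚ)) * (-1/2) := by rw [key]; push_cast; ring
  exact mul_left_cancel₀ h2 key2

lemma Hn_zero (s : ℕ) : Hn 0 s = 0 := by simp [Hn]

lemma Bswap (s n : ℕ) :
    ∑ k ∈ Icc 1 n, Hn (k-1) s * (k:ℚ) * dd n k = (n:ℚ)/2 * Af s n - 1/2 * Afp s n := by
  set G : ℕ → ℚ := fun k => -(Hn k s) * ((n:ℚ)-k) * dd n k with hG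
  have hR : (n:ℚ) * Af s n - Afp s n
      = ∑ i ∈ range n, ((-1:ℚ)^(i+1)/((i:ℚ)+1)^s * ((n:ℚ)-((i:ℚ)+1)) * dd n (i+1)) := by
    rw [Af, Afp, sum_Icc_one n (fun k => (-1:ℚ)^k / (k:ℚ)^s * dd n k),
      sum_Icc_one n (fun k => (-1:ℚ)^k * (k:ℚ) / (k:ℚ)^s * dd n k), Finset.mul_sum,
      ← Finset.sum_sub_distrib]
    apply Finset.sum_congr rfl
    intro i _
    push_cast
    ring
  have key : 2 * ∑ k ∈ Icc 1 n, Hn (k-1) s * (k:ℚ) * dd n k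
      = (∑ i ∈ range n, (G (i+1) - G i)) + ((n:ℚ) * Af s n - Afp s n) := by
    rw [hR, ← Finset.sum_add_distrib,
      sum_Icc_one n (fun k => Hn (k-1) s * (k:ℚ) * dd n k), Finset.mul_sum]
    apply Finset.sum_congr rfl
    intro i _
    simp only [hG, Hn_succ, Nat.add_sub_cancel]
    push_cast
    linear_combination (-(Hn i s)) * dd_succ n i
  rw [Finset.sum_range_sub] at key
  have hGn : G n = 0 := by simp only [hG]; rw [sub_self, mul_zero, zero_mul]
  have hG0 : G 0 = 0 := by simp only [hG, Hn_zero]; ring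
  rw [hGn, hG0] at key
  linarith

lemma Hstar_nil (n : ℕ) : Hstar n [] = 1 := by simp [Hstar]

lemma Hstar_zero (s : ℤ) (r : List ℤ) : Hstar 0 (s :: r) = 0 := by simp [Hstar]

lemma Hstar_succ (n : ℕ) (s : ℤ) (r : List ℤ) :
    Hstar (n+1) (s :: r)
      = Hstar n (s :: r) + aSgn s ^ (n+1) / ((n:ℚ)+1) ^ s.natAbs * Hstar (n+1) r := by
  show (∑ k ∈ Finset.Icc 1 (n+1), aSgn s ^ k / (k : ℚ) ^ s.natAbs * Hstar k r) = _
  rw [Finset.sum_Icc_succ_top (by omega)]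
  rw [show (Hstar n (s :: r)) = ∑ k ∈ Finset.Icc 1 n, aSgn s ^ k / (k : ℚ) ^ s.natAbs * Hstar k r from rfl]
  push_cast
  ring

lemma aSgn_two : aSgn 2 = 1 := by norm_num [aSgn]
lemma aSgn_one : aSgn 1 = 1 := by norm_num [aSgn]

lemma Af_zero_n (s : ℕ) : Af s 0 = 0 := by simp [Af]

lemma Etwo : ∀ b n, 1 ≤ n → Hstar n (List.replicate b 2) = -2 * Af (2*b) n := by
  intro b
  induction b with
  | zero =>
    intro n hn
    have h0 : 2*0 = 0 := by norm_num
    rw [List.replicate_zero, Hstar_nil, h0, Azero n hn]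
    norm_num
  | succ b ih =>
    have main : ∀ n, Hstar n (List.replicate (b+1) 2) = -2 * Af (2*(b+1)) n := by
      intro n
      induction n with
      | zero =>
        rw [List.replicate_succ, Hstar_zero, Af_zero_n]
        norm_num
      | succ n ihn =>
        rw [List.replicate_succ, Hstar_succ, ← List.replicate_succ, ihn]
        have hA : Af (2*(b+1)) (n+1)
            = Af (2*(b+1)) n + (((n:ℚ)+1)^2)⁻¹ * Af (2*b) (n+1) := by
          have h1 := sumdd_succ n (fun k => (-1:ℚ)^k/(k:ℚ)^(2*(b+1)))
          have h2 : ∑ k ∈ Icc 1 (n+1), (k:ℚ)^2 * ((-1:ℚ)^k/(k:ℚ)^(2*(b+1))) * dd (n+1) k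
              = Af (2*b) (n+1) := by
            rw [Af]
            apply Finset.sum_congr rfl
            intro k hk
            have hk1 : 1 ≤ k := (Finset.mem_Icc.mp hk).1
            have hkne : (k:ℚ) ≠ 0 := Nat.cast_ne_zero.mpr (by omega)
            have he : 2*(b+1) = 2*b + 2 := by ring
            rw [he, pow_add]
            field_simp
          rw [Af, Af]
          rw [h2] at h1
          exact h1
        rw [hA, ih (n+1) (by omega), aSgn_two]
        have hnatabs : ((2:ℤ)).natAbs = 2 := rfl
        rw [hnatabs, one_pow]
        have hne : (((n:ℚ)+1)^2) ≠ 0 := by positivity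
        field_simp
        ring
    exact fun n _ => main n

def Bf (b m n : ℕ) : ℚ := ∑ k ∈ Icc 1 n, Hn (k-1) (2*b) / (k:ℚ)^m * dd n k

lemma Bf_zero_n (b m : ℕ) : Bf b m 0 = 0 := by simp [Bf]

lemma mainAux (b : ℕ) : ∀ a n,
    Hstar n (List.replicate a 2 ++ 1 :: List.replicate b 2)
      = -2 * Af (2*a+1+2*b) n - 4 * Bf b (2*a+1) n := by
  intro a
  induction a with
  | zero =>
    intro n
    have hl : List.replicate 0 2 ++ 1 :: List.replicate b 2 = (1:ℤ) :: List.replicate b 2 := by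
      simp
    induction n with
    | zero =>
      rw [hl, Hstar_zero, Af_zero_n, Bf_zero_n]
      norm_num
    | succ n ihn =>
      rw [hl] at ihn ⊢
      rw [Hstar_succ, ihn, aSgn_one]
      have hnatabs : ((1:ℤ)).natAbs = 1 := rfl
      rw [hnatabs, one_pow, pow_one]
      have hA : Af (2*0+1+2*b) (n+1)
          = Af (2*0+1+2*b) n + (((n:ℚ)+1)^2)⁻¹ * Afp (2*b) (n+1) := by
        have h1 := sumdd_succ n (fun k => (-1:ℚ)^k/(k:ℚ)^(2*0+1+2*b))
        have h2 : ∑ k ∈ Icc 1 (n+1), (k:ℚ)^2 * ((-1:ℚ)^k/(k:ℚ)^(2*0+1+2*b)) * dd (n+1) k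
            = Afp (2*b) (n+1) := by
          rw [Afp]
          apply Finset.sum_congr rfl
          intro k hk
          have hk1 : 1 ≤ k := (Finset.mem_Icc.mp hk).1
          have hkne : (k:ℚ) ≠ 0 := Nat.cast_ne_zero.mpr (by omega)
          have he : 2*0+1+2*b = 2*b+1 := by ring
          rw [he, pow_succ]
          field_simp
          ring
        rw [Af, Af]
        rw [h2] at h1
        exact h1
      have hB : Bf b (2*0+1) (n+1)
          = Bf b (2*0+1) n
            + (((n:ℚ)+1)^2)⁻¹ * (((n:ℚ)+1)/2 * Af (2*b) (n+1) - 1/2 * Afp (2*b) (n+1)) := by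
        have h1 := sumdd_succ n (fun k => Hn (k-1) (2*b)/(k:ℚ)^(2*0+1))
        have h2 : ∑ k ∈ Icc 1 (n+1), (k:ℚ)^2 * (Hn (k-1) (2*b)/(k:ℚ)^(2*0+1)) * dd (n+1) k
            = ∑ k ∈ Icc 1 (n+1), Hn (k-1) (2*b) * (k:ℚ) * dd (n+1) k := by
          apply Finset.sum_congr rfl
          intro k hk
          have hk1 : 1 ≤ k := (Finset.mem_Icc.mp hk).1
          have hkne : (k:ℚ) ≠ 0 := Nat.cast_ne_zero.mpr (by omega)
          field_simp
          ring
        rw [Bf, Bf]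
        rw [h2, Bswap (2*b) (n+1)] at h1
        push_cast at h1 ⊢
        exact h1
      rw [hA, hB, Etwo b (n+1) (by omega)]
      have hne : ((n:ℚ)+1) ≠ 0 := by positivity
      field_simp
      ring
  | succ a iha =>
    intro n
    have hl : List.replicate (a+1) 2 ++ 1 :: List.replicate b 2
        = (2:ℤ) :: (List.replicate a 2 ++ 1 :: List.replicate b 2) := by
      simp [List.replicate_succ]
    induction n with
    | zero =>
      rw [hl, Hstar_zero, Af_zero_n, Bf_zero_n]
      norm_num
    | succ n ihn =>
      rw [hl] at ihn ⊢
      rw [Hstar_succ, ihn, aSgn_two]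
      have hnatabs : ((2:ℤ)).natAbs = 2 := rfl
      rw [hnatabs, one_pow, iha (n+1)]
      have hA : Af (2*(a+1)+1+2*b) (n+1)
          = Af (2*(a+1)+1+2*b) n + (((n:ℚ)+1)^2)⁻¹ * Af (2*a+1+2*b) (n+1) := by
        have h1 := sumdd_succ n (fun k => (-1:ℚ)^k/(k:ℚ)^(2*(a+1)+1+2*b))
        have h2 : ∑ k ∈ Icc 1 (n+1), (k:ℚ)^2 * ((-1:ℚ)^k/(k:ℚ)^(2*(a+1)+1+2*b)) * dd (n+1) k
            = Af (2*a+1+2*b) (n+1) := by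
          rw [Af]
          apply Finset.sum_congr rfl
          intro k hk
          have hk1 : 1 ≤ k := (Finset.mem_Icc.mp hk).1
          have hkne : (k:ℚ) ≠ 0 := Nat.cast_ne_zero.mpr (by omega)
          have he : 2*(a+1)+1+2*b = (2*a+1+2*b)+2 := by ring
          rw [he, pow_add]
          field_simp
        rw [Af, Af]
        rw [h2] at h1
        exact h1
      have hB : Bf b (2*(a+1)+1) (n+1)
          = Bf b (2*(a+1)+1) n + (((n:ℚ)+1)^2)⁻¹ * Bf b (2*a+1) (n+1) := by
        have h1 := sumdd_succ n (fun k => Hn (k-1) (2*b)/(k:ℚ)^(2*(a+1)+1))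
        have h2 : ∑ k ∈ Icc 1 (n+1), (k:ℚ)^2 * (Hn (k-1) (2*b)/(k:ℚ)^(2*(a+1)+1)) * dd (n+1) k
            = Bf b (2*a+1) (n+1) := by
          rw [Bf]
          apply Finset.sum_congr rfl
          intro k hk
          have hk1 : 1 ≤ k := (Finset.mem_Icc.mp hk).1
          have hkne : (k:ℚ) ≠ 0 := Nat.cast_ne_zero.mpr (by omega)
          have he : 2*(a+1)+1 = (2*a+1)+2 := by ring
          rw [he, pow_add]
          field_simp
        rw [Bf, Bf]
        rw [h2] at h1
        exact h1
      rw [hA, hB]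
      have hne : (((n:ℚ)+1)^2) ≠ 0 := by positivity
      field_simp
      ring

lemma Hh_nil (m : ℕ) : Hh m [] = 1 := by simp [Hh]

lemma Hh_single (m b : ℕ) : Hh m [-(2*(b:ℤ))] = Hn m (2*b) := by
  have h1 : aSgn (-(2*(b:ℤ))) = -1 := by
    simp only [aSgn, if_neg (by omega : ¬ (0:ℤ) < -(2*(b:ℤ)))]
  have h2 : ((-(2*(b:ℤ))).natAbs) = 2*b := by
    simp [Int.natAbs_neg, Int.natAbs_mul]
  show (∑ k ∈ Finset.Icc 1 m,
      aSgn (-(2*(b:ℤ))) ^ k / (k:ℚ) ^ ((-(2*(b:ℤ))).natAbs) * Hh (k-1) []) = _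
  rw [Hn]
  apply Finset.sum_congr rfl
  intro k _
  rw [h1, h2, Hh_nil, mul_one]

theorem stmt2 (n a b : ℕ) (hn : 1 ≤ n) (hb : 1 ≤ b) :
    Hstar n (List.replicate a 2 ++ [1] ++ List.replicate b 2)
      = -2 * ∑ k ∈ Finset.Icc 1 n,
            (-1 : ℚ) ^ k * (n.choose k) / ((k : ℚ) ^ (2*a+1+2*b) * ((n+k).choose k))
        - 4 * ∑ k ∈ Finset.Icc 1 n,
            Hh (k-1) [-(2 * (b : ℤ))] * (n.choose k) / ((k : ℚ) ^ (2*a+1) * ((n+k).choose k)) := by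
  simp only [List.append_assoc, List.singleton_append]
  rw [mainAux b a n]
  have e1 : Af (2*a+1+2*b) n
      = ∑ k ∈ Finset.Icc 1 n,
          (-1:ℚ)^k * (n.choose k) / ((k:ℚ)^(2*a+1+2*b) * ((n+k).choose k)) := by
    rw [Af]
    apply Finset.sum_congr rfl
    intro k _
    rw [dd, div_mul_div_comm]
  have e2 : Bf b (2*a+1) n
      = ∑ k ∈ Finset.Icc 1 n,
          Hh (k-1) [-(2*(b:ℤ))] * (n.choose k) / ((k:ℚ)^(2*a+1) * ((n+k).choose k)) := by
    rw [Bf]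
    apply Finset.sum_congr rfl
    intro k _
    rw [Hh_single, dd, div_mul_div_comm]
  rw [e1, e2]
end

section
/- For all integers n ≥ 1 and a ≥ 0, the alternating multiple harmonic star sum H*_n({1}^a, -1) = ∑_{n ≥ k_1 ≥ ... ≥ k_{a+1} ≥ 1} (-1)^{k_{a+1}}/(k_1·k_2·...·k_{a+1}) equals ∑_{k=1}^{n} (2^k - 1)·(-1)^k·C(n,k)/k^{a+1}. -/
open Finset

/-- The binomial-type sum appearing on the right-hand side. -/
def S (a n : ℕ) : ℚ :=
  ∑ k ∈ Icc 1 n, ((2:ℚ)^k - 1) * (-1:ℚ)^k * (n.choose k) / (k:ℚ)^a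

lemma S_zero (m : ℕ) : S 0 (m+1) = (-1:ℚ)^(m+1) := by
  have h1 : ∑ k ∈ range (m+2), ((-2:ℚ))^k * 1^(m+1-k) * ((m+1).choose k) = ((-2)+1)^(m+1) :=
    (add_pow (-2:ℚ) 1 (m+1)).symm
  have h2 : ∑ k ∈ range (m+2), ((-1:ℚ))^k * 1^(m+1-k) * ((m+1).choose k) = ((-1)+1)^(m+1) :=
    (add_pow (-1:ℚ) 1 (m+1)).symm
  have key : ∑ k ∈ range (m+2), ((2:ℚ)^k - 1) * (-1:ℚ)^k * ((m+1).choose k) = (-1:ℚ)^(m+1) := by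
    have hterm : ∀ k ∈ range (m+2), ((2:ℚ)^k - 1) * (-1:ℚ)^k * ((m+1).choose k)
        = ((-2:ℚ))^k * 1^(m+1-k) * ((m+1).choose k) - ((-1:ℚ))^k * 1^(m+1-k) * ((m+1).choose k) := by
      intro k _
      have hnp : ((-2:ℚ))^k = (-1:ℚ)^k * 2^k := by rw [neg_pow]
      rw [hnp]; ring
    rw [Finset.sum_congr rfl hterm, Finset.sum_sub_distrib, h1, h2]
    norm_num
  have hrange : ∑ k ∈ range (m+2), ((2:ℚ)^k - 1) * (-1:ℚ)^k * ((m+1).choose k)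
      = ∑ k ∈ Icc 1 (m+1), ((2:ℚ)^k - 1) * (-1:ℚ)^k * ((m+1).choose k) := by
    rw [Finset.sum_range_succ', ← Finset.Ico_add_one_right_eq_Icc, Finset.sum_Ico_eq_sum_range]
    simp [add_comm]
  unfold S
  have h0 : ∀ k ∈ Icc 1 (m+1), ((2:ℚ)^k - 1) * (-1:ℚ)^k * ((m+1).choose k) / (k:ℚ)^0
      = ((2:ℚ)^k - 1) * (-1:ℚ)^k * ((m+1).choose k) := by intro k _; simp
  rw [Finset.sum_congr rfl h0, ← hrange, key]

lemma S_step (a m : ℕ) : S (a+1) (m+1) = S (a+1) m + S a (m+1) / (m+1) := by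
  have hext : S (a+1) m = ∑ k ∈ Icc 1 (m+1), ((2:ℚ)^k - 1) * (-1:ℚ)^k * (m.choose k) / (k:ℚ)^(a+1) := by
    unfold S
    rw [Finset.sum_Icc_succ_top (by omega : 1 ≤ m+1)]
    simp [Nat.choose_succ_self]
  rw [hext]
  unfold S
  rw [Finset.sum_div, ← Finset.sum_add_distrib]
  apply Finset.sum_congr rfl
  intro k hk
  simp only [mem_Icc] at hk
  obtain ⟨j, rfl⟩ : ∃ j, k = j + 1 := ⟨k - 1, by omega⟩
  have hc : ((m+1).choose (j+1) : ℚ) = (m.choose j : ℚ) + (m.choose (j+1) : ℚ) := by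
    rw [Nat.choose_succ_succ]; push_cast; ring
  have hrel : ((m:ℚ)+1) * (m.choose j : ℚ) = ((j:ℚ)+1) * ((m+1).choose (j+1) : ℚ) := by
    have h := Nat.add_one_mul_choose_eq m j
    have h2 : (((m+1) * m.choose j : ℕ) : ℚ) = (((m+1).choose (j+1) * (j+1) : ℕ) : ℚ) := by
      exact_mod_cast congrArg (fun x : ℕ => (x:ℚ)) h
    push_cast at h2; linarith
  have hk0 : ((j:ℚ)+1) ≠ 0 := by positivity
  have hm0 : ((m:ℚ)+1) ≠ 0 := by positivity
  have hcast : ((j+1:ℕ):ℚ) = (j:ℚ)+1 := by push_cast; ring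
  have key : (m.choose j : ℚ) / ((j:ℚ)+1)^(a+1)
      = ((m+1).choose (j+1) : ℚ) / ((j:ℚ)+1)^a / ((m:ℚ)+1) := by
    rw [div_div, div_eq_div_iff (by positivity) (by positivity), pow_succ]
    linear_combination ((j:ℚ)+1)^a * hrel
  rw [hcast]
  linear_combination (((2:ℚ)^(j+1)-1)*(-1:ℚ)^(j+1)) * key
    + (((2:ℚ)^(j+1)-1)*(-1:ℚ)^(j+1))/((j:ℚ)+1)^(a+1) * hc

lemma Hstar_neg_one (n : ℕ) : Hstar n [-1] = ∑ k ∈ Icc 1 n, (-1:ℚ)^k / k := by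
  rw [Hstar]
  apply Finset.sum_congr rfl
  intro k _
  rw [Hstar]
  simp [aSgn]

lemma Hstar_one_cons (n : ℕ) (r : List ℤ) :
    Hstar n (1 :: r) = ∑ k ∈ Icc 1 n, Hstar k r / k := by
  rw [Hstar]
  apply Finset.sum_congr rfl
  intro k _
  simp [aSgn]
  ring

lemma main_lemma (a : ℕ) : ∀ n, Hstar n (List.replicate a 1 ++ [-1]) = S (a+1) n := by
  induction a with
  | zero =>
    intro n
    induction n with
    | zero => simp [Hstar_neg_one, S]
    | succ m ih =>
      rw [List.replicate, List.nil_append] at *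
      rw [Hstar_neg_one, Finset.sum_Icc_succ_top (by omega : 1 ≤ m+1),
        ← Hstar_neg_one, ih, S_step, S_zero]
      push_cast; ring
  | succ b ih =>
    intro n
    have hrep : List.replicate (b+1) 1 ++ [-1] = (1:ℤ) :: (List.replicate b 1 ++ [-1]) := rfl
    rw [hrep]
    induction n with
    | zero => simp [Hstar_one_cons, S]
    | succ m ihn =>
      rw [Hstar_one_cons, Finset.sum_Icc_succ_top (by omega : 1 ≤ m+1),
        ← Hstar_one_cons, ihn, ih]
      conv_rhs => rw [S_step]
      push_cast; ring

theorem stmt13 (n a : ℕ) (hn : 1 ≤ n) :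
    Hstar n (List.replicate a 1 ++ [-1])
      = ∑ k ∈ Finset.Icc 1 n,
          ((2 : ℚ) ^ k - 1) * (-1 : ℚ) ^ k * (n.choose k) / (k : ℚ) ^ (a+1) := by
  rw [main_lemma a n]; rfl
end
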